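/- Let n ≥ 3 be an integer and 0 ≤ k ≤ n−2. Let W = (0,…,0) ∈ ℤ^{n−1} (the vacuum state) and Z* ∈ ℤ^{n−1} be the tuple with Z*_{k+1} = 0 and Z*_j = 1 for j ≠ k+1 (the initial carrier). Let b = (b_1,…,b_{n−1}) be a tuple of positive integers with b_{k+1} = 1, and set B = b_1 + ⋯ + b_{n−1}. Consider the initial configuration Y^0 with Y^0_0 = b and Y^0_i = W for all i ≥ 1, and evolve it by the Φ(n,k) dynamics with initial carrier Z*. Then: (i) at every time step the final carrier equals the initial one, i.e. for every t the carriers Z^t_i produced during the t-th step satisfy Z^t_i = Z* for all sufficiently large i; and (ii) for every integer m ≥ 0, the configuration after m·B time steps is the m-site translate of the initial one: Y^{mB}_m = b and Y^{mB}_i = W for all i ≠ m. In particular, b is a one-soliton of minimal length one with velocity 1/B = (Σ_{j=1}^{n−1} b_j)^{−1}. -/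
import Mathlib


/-- `min(Z_a, Y_b)` with the convention that the entry at the index class `0`
(the subscript `n`) is `+∞` and hence omitted from the minimum. -/
def tropMin (n : ℕ) (Z Y : ZMod n → ℤ) (a b : ZMod n) : ℤ :=
  if a = 0 then Y b else if b = 0 then Z a else min (Z a) (Y b)

/-- The new state `Y′` of the one-vertex step of `Φ(n,k)`:
`Y′_j = Y_j + min(Z_{k+2−j}, Y_{j−1}) − min(Z_{k+1−j}, Y_j)` for `j = 1,…,n−1`
(subscripts mod `n`, entries at the class `0` being `+∞`-omitted; the unused
slot `0` of the output tuple is set to `0`). -/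
def stepY (n k : ℕ) (Z Y : ZMod n → ℤ) : ZMod n → ℤ := fun j =>
  if j = 0 then 0 else
    Y j + tropMin n Z Y (((k + 2 : ℕ) : ZMod n) - j) (j - 1)
        - tropMin n Z Y (((k + 1 : ℕ) : ZMod n) - j) j

/-- The new carrier `Z′` of the one-vertex step of `Φ(n,k)`:
`Z′_j = Z_j + min(Z_{j+1}, Y_{k−j}) − min(Z_j, Y_{k+1−j})` for `j = 1,…,n−1`. -/
def stepZ (n k : ℕ) (Z Y : ZMod n → ℤ) : ZMod n → ℤ := fun j =>
  if j = 0 then 0 else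
    Z j + tropMin n Z Y (j + 1) (((k : ℕ) : ZMod n) - j)
        - tropMin n Z Y j (((k + 1 : ℕ) : ZMod n) - j)

/-- The carriers produced while performing one time step of the `Φ(n,k)` dynamics on a
configuration `Y` of states, starting from the initial carrier `Zs`:
`Z_0 = Zs`, `Z_{i+1} = stepZ(Z_i, Y_i)`. -/
def carriers (n k : ℕ) (Zs : ZMod n → ℤ) (Y : ℕ → ZMod n → ℤ) : ℕ → ZMod n → ℤ
  | 0 => Zs
  | i + 1 => stepZ n k (carriers n k Zs Y i) (Y i)

/-- The time evolution of the `Φ(n,k)` dynamics: `config t` is the configuration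
of states at time `t`, obtained from the initial configuration `Y0` using the
initial carrier `Zs` at each time step. -/
def config (n k : ℕ) (Zs : ZMod n → ℤ) (Y0 : ℕ → ZMod n → ℤ) : ℕ → ℕ → ZMod n → ℤ
  | 0 => Y0
  | t + 1 => fun i =>
      stepY n k (carriers n k Zs (config n k Zs Y0 t) i) (config n k Zs Y0 t i)

namespace Sol

/-- The "tail" profile. -/
def Df (n : ℕ) (b : ZMod n → ℤ) (p : ℕ) (d : ℤ) : ZMod n → ℤ :=
  fun j => if j.val < p then 0 else if j.val = p then d else b j

/-- The "head" profile. -/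
def Cf (n : ℕ) (b : ZMod n → ℤ) (p : ℕ) (d : ℤ) : ZMod n → ℤ :=
  fun j => if j.val < p then b j else if j.val = p then b j - d else 0

/-- The carrier with `0` at slot `k+1-p`. -/
def ZC (n k p : ℕ) : ZMod n → ℤ :=
  fun j => if j = 0 then 0 else
    if j = ((k + 1 : ℕ) : ZMod n) - ((p : ℕ) : ZMod n) then 0 else 1

section
variable {n k p : ℕ} {b : ZMod n → ℤ} {d : ℤ}

lemma cast_val [NeZero n] (x : ZMod n) : ((x.val : ℕ) : ZMod n) = x :=
  ZMod.natCast_rightInverse x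

lemma val_inj [NeZero n] {x y : ZMod n} (h : x.val = y.val) : x = y := by
  rw [← cast_val x, ← cast_val y, h]

lemma sub_one_val (hn : 3 ≤ n) (x : ZMod n) :
    (x - 1).val = if x = 0 then n - 1 else x.val - 1 := by
  haveI : NeZero n := ⟨by omega⟩
  by_cases h : x = 0
  · rw [if_pos h, h]
    have h1 : ((n - 1 : ℕ) : ZMod n) = 0 - 1 := by
      have : ((n - 1 : ℕ) : ZMod n) = (n : ℕ) - 1 := by
        push_cast [Nat.cast_sub (by omega : 1 ≤ n)]; ring
      rw [this, ZMod.natCast_self]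
    rw [← h1, ZMod.val_cast_of_lt (by omega)]
  · rw [if_neg h]
    have hv : 1 ≤ x.val := by
      rcases Nat.eq_zero_or_pos x.val with h0 | h0
      · exact absurd ((ZMod.val_eq_zero x).mp h0) h
      · exact h0
    have h1 : ((x.val - 1 : ℕ) : ZMod n) = x - 1 := by
      push_cast [Nat.cast_sub hv, cast_val]; ring
    rw [← h1, ZMod.val_cast_of_lt (by have := ZMod.val_lt x; omega)]

lemma ZC_nonneg (q : ℕ) (x : ZMod n) : 0 ≤ ZC n k q x := by
  unfold ZC; split_ifs <;> norm_num

lemma ZC0_K1 (hn : 3 ≤ n) : ZC n k 0 ((k + 1 : ℕ) : ZMod n) = 0 := by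
  unfold ZC
  split_ifs with h1 h2
  · rfl
  · rfl
  · exact absurd (by push_cast; ring) h2

end
section
variable {n k p : ℕ} {b : ZMod n → ℤ} {d : ℤ}

lemma K1_val (hn : 3 ≤ n) (hk : k ≤ n - 2) :
    haveI : NeZero n := ⟨by omega⟩
    ((k + 1 : ℕ) : ZMod n).val = k + 1 := by
  haveI : NeZero n := ⟨by omega⟩
  exact ZMod.val_cast_of_lt (by omega)

lemma K1_ne (hn : 3 ≤ n) (hk : k ≤ n - 2) : ((k + 1 : ℕ) : ZMod n) ≠ 0 := by
  haveI : NeZero n := ⟨by omega⟩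
  intro h
  have := K1_val hn hk
  rw [h, ZMod.val_zero] at this
  omega

lemma P_val (hn : 3 ≤ n) (hp2 : p ≤ n - 1) :
    haveI : NeZero n := ⟨by omega⟩
    ((p : ℕ) : ZMod n).val = p := by
  haveI : NeZero n := ⟨by omega⟩
  exact ZMod.val_cast_of_lt (by omega)

lemma P_ne (hn : 3 ≤ n) (hp1 : 1 ≤ p) (hp2 : p ≤ n - 1) : ((p : ℕ) : ZMod n) ≠ 0 := by
  haveI : NeZero n := ⟨by omega⟩
  intro h
  have := P_val hn hp2
  rw [h, ZMod.val_zero] at this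
  omega

lemma eqP_iff (hn : 3 ≤ n) (hp2 : p ≤ n - 1) (x : ZMod n) :
    x = ((p : ℕ) : ZMod n) ↔ x.val = p := by
  haveI : NeZero n := ⟨by omega⟩
  constructor
  · intro h; rw [h]; exact P_val hn hp2
  · intro h; exact val_inj (by rw [h, P_val hn hp2])

lemma minDf (hn : 3 ≤ n) (hb : ∀ j : ZMod n, j ≠ 0 → 1 ≤ b j) (hd1 : 1 ≤ d)
    (x : ZMod n) (hx : x ≠ 0) :
    min 1 (Df n b p d x) = if p ≤ x.val then 1 else 0 := by
  haveI : NeZero n := ⟨by omega⟩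
  unfold Df
  rcases lt_trichotomy x.val p with h | h | h
  · rw [if_pos h, if_neg (by omega)]; norm_num
  · rw [if_neg (by omega), if_pos h, if_pos (by omega)]; omega
  · rw [if_neg (by omega), if_neg (by omega), if_pos (by omega)]
    have := hb x hx; omega

lemma DfK1 (hn : 3 ≤ n) (hk : k ≤ n - 2)
    (hbk : b ((k + 1 : ℕ) : ZMod n) = 1) (hd1 : 1 ≤ d)
    (hd2 : d ≤ b ((p : ℕ) : ZMod n)) :
    Df n b p d ((k + 1 : ℕ) : ZMod n) = if p ≤ k + 1 then 1 else 0 := by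
  haveI : NeZero n := ⟨by omega⟩
  unfold Df
  rw [K1_val hn hk]
  rcases lt_trichotomy (k + 1) p with h | h | h
  · rw [if_pos h, if_neg (by omega)]
  · have hP : ((p : ℕ) : ZMod n) = ((k + 1 : ℕ) : ZMod n) := by rw [← h]
    rw [hP, hbk] at hd2
    rw [if_neg (by omega), if_pos (by omega), if_pos (by omega)]
    omega
  · rw [if_neg (by omega), if_neg (by omega), if_pos (by omega), hbk]

lemma minCf (hn : 3 ≤ n) (hb : ∀ j : ZMod n, j ≠ 0 → 1 ≤ b j)
    (x : ZMod n) (hx : x ≠ 0) (hxp : x.val ≠ p) :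
    min 1 (Cf n b p d x) = if x.val < p then 1 else 0 := by
  haveI : NeZero n := ⟨by omega⟩
  unfold Cf
  rcases lt_trichotomy x.val p with h | h | h
  · rw [if_pos h, if_pos h]
    have := hb x hx; omega
  · exact absurd h hxp
  · rw [if_neg (by omega), if_neg (by omega), if_neg (by omega)]; norm_num

lemma CfK1 (hn : 3 ≤ n) (hk : k ≤ n - 2)
    (hbk : b ((k + 1 : ℕ) : ZMod n) = 1) (hd1 : 1 ≤ d)
    (hd2 : d ≤ b ((p : ℕ) : ZMod n)) :
    Cf n b p d ((k + 1 : ℕ) : ZMod n) = if k + 1 < p then 1 else 0 := by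
  haveI : NeZero n := ⟨by omega⟩
  unfold Cf
  rw [K1_val hn hk]
  rcases lt_trichotomy (k + 1) p with h | h | h
  · rw [if_pos h, if_pos h, hbk]
  · have hP : ((p : ℕ) : ZMod n) = ((k + 1 : ℕ) : ZMod n) := by rw [← h]
    rw [hP, hbk] at hd2
    rw [if_neg (by omega), if_pos (by omega), if_neg (by omega), hbk]
    omega
  · rw [if_neg (by omega), if_neg (by omega), if_neg (by omega)]

lemma CfP_nonneg (hd2 : d ≤ b ((p : ℕ) : ZMod n)) (hn : 3 ≤ n) (hp2 : p ≤ n - 1) :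
    min 0 (Cf n b p d ((p : ℕ) : ZMod n)) = 0 := by
  haveI : NeZero n := ⟨by omega⟩
  unfold Cf
  rw [P_val hn hp2, if_neg (by omega), if_pos rfl]
  omega

/-- Vacuum is fixed by the `Zs`-carrier. -/
lemma stepY_W (hn : 3 ≤ n) (hk : k ≤ n - 2) :
    stepY n k (ZC n k 0) (fun _ => 0) = fun _ => 0 := by
  haveI : NeZero n := ⟨by omega⟩
  funext j
  unfold stepY
  by_cases hj : j = 0
  · rw [if_pos hj]
  rw [if_neg hj]
  have hT2 : tropMin n (ZC n k 0) (fun _ => 0) (((k + 1 : ℕ) : ZMod n) - j) j = 0 := by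
    unfold tropMin
    by_cases h : ((k + 1 : ℕ) : ZMod n) - j = 0
    · rw [if_pos h]
    · rw [if_neg h, if_neg hj]
      exact min_eq_right (ZC_nonneg 0 _)
  have hT1 : tropMin n (ZC n k 0) (fun _ => 0) (((k + 2 : ℕ) : ZMod n) - j) (j - 1) = 0 := by
    unfold tropMin
    by_cases h : ((k + 2 : ℕ) : ZMod n) - j = 0
    · rw [if_pos h]
    rw [if_neg h]
    by_cases h2 : j - 1 = 0
    · rw [if_pos h2]
      have hj1 : j = 1 := by linear_combination h2
      have he : ((k + 2 : ℕ) : ZMod n) - j = ((k + 1 : ℕ) : ZMod n) := by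
        rw [hj1]; push_cast; ring
      rw [he, ZC0_K1 hn]
    · rw [if_neg h2]
      exact min_eq_right (ZC_nonneg 0 _)
  rw [hT1, hT2]; ring

/-- The carrier `Zs` passes through the vacuum unchanged. -/
lemma stepZ_W (hn : 3 ≤ n) (hk : k ≤ n - 2) :
    stepZ n k (ZC n k 0) (fun _ => 0) = ZC n k 0 := by
  haveI : NeZero n := ⟨by omega⟩
  funext j
  unfold stepZ
  by_cases hj : j = 0
  · rw [if_pos hj, hj]
    unfold ZC
    rw [if_pos rfl]
  rw [if_neg hj]
  have hU2 : tropMin n (ZC n k 0) (fun _ => 0) j (((k + 1 : ℕ) : ZMod n) - j) = 0 := by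
    unfold tropMin
    rw [if_neg hj]
    by_cases h : ((k + 1 : ℕ) : ZMod n) - j = 0
    · rw [if_pos h]
      have hjk : j = ((k + 1 : ℕ) : ZMod n) := by linear_combination -h
      rw [hjk, ZC0_K1 hn]
    · rw [if_neg h]
      exact min_eq_right (ZC_nonneg 0 _)
  have hU1 : tropMin n (ZC n k 0) (fun _ => 0) (j + 1) (((k : ℕ) : ZMod n) - j) = 0 := by
    unfold tropMin
    by_cases h : j + 1 = 0
    · rw [if_pos h]
    rw [if_neg h]
    by_cases h2 : ((k : ℕ) : ZMod n) - j = 0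
    · rw [if_pos h2]
      have he : j + 1 = ((k + 1 : ℕ) : ZMod n) := by push_cast; linear_combination -h2
      rw [he, ZC0_K1 hn]
    · rw [if_neg h2]
      exact min_eq_right (ZC_nonneg 0 _)
  rw [hU1, hU2]; ring

end
section
variable {n k p : ℕ} {b : ZMod n → ℤ} {d : ℤ}

lemma ZCp_K1 (hn : 3 ≤ n) (hk : k ≤ n - 2) (hp1 : 1 ≤ p) (hp2 : p ≤ n - 1) :
    ZC n k p ((k + 1 : ℕ) : ZMod n) = 1 := by
  haveI : NeZero n := ⟨by omega⟩
  unfold ZC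
  rw [if_neg (K1_ne hn hk), if_neg]
  intro hh
  exact P_ne hn hp1 hp2 (by linear_combination hh)

lemma ZC_eval (hn : 3 ≤ n) (hp2 : p ≤ n - 1) (j : ZMod n) (hj : j ≠ 0) :
    ZC n k p j = if (((k + 1 : ℕ) : ZMod n) - j).val = p then 0 else 1 := by
  haveI : NeZero n := ⟨by omega⟩
  unfold ZC
  rw [if_neg hj]
  have hiff : (j = ((k + 1 : ℕ) : ZMod n) - ((p : ℕ) : ZMod n)) ↔
      ((((k + 1 : ℕ) : ZMod n) - j).val = p) := by
    constructor
    · intro hh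
      have h2 : (((k + 1 : ℕ) : ZMod n) - j) = ((p : ℕ) : ZMod n) := by
        rw [hh]; ring
      rw [h2]; exact ZMod.val_cast_of_lt (by omega)
    · intro hh
      have h2 : (((k + 1 : ℕ) : ZMod n) - j) = ((p : ℕ) : ZMod n) := by
        rw [← cast_val (((k + 1 : ℕ) : ZMod n) - j), hh]
      linear_combination -h2
  simp only [hiff]

lemma w'_val (hn : 3 ≤ n) (x : ZMod n) :
    (x - 1).val = if x.val = 0 then n - 1 else x.val - 1 := by
  haveI : NeZero n := ⟨by omega⟩
  rw [sub_one_val hn]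
  by_cases h : x = 0
  · rw [if_pos h, if_pos (by rw [h, ZMod.val_zero])]
  · rw [if_neg h, if_neg (fun hh => h ((ZMod.val_eq_zero _).mp hh))]

/-- Processing the tail: the state loses one unit at slot `p`. -/
lemma stepY_D (hn : 3 ≤ n) (hk : k ≤ n - 2) (hb0 : b 0 = 0)
    (hb : ∀ j : ZMod n, j ≠ 0 → 1 ≤ b j) (hbk : b ((k + 1 : ℕ) : ZMod n) = 1)
    (hp1 : 1 ≤ p) (hp2 : p ≤ n - 1) (hd1 : 1 ≤ d) (hd2 : d ≤ b ((p : ℕ) : ZMod n)) :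
    stepY n k (ZC n k 0) (Df n b p d) =
      fun j => Df n b p d j - (if j = ((p : ℕ) : ZMod n) then 1 else 0) := by
  haveI : NeZero n := ⟨by omega⟩
  haveI : Fact (1 < n) := ⟨by omega⟩
  funext j
  unfold stepY
  by_cases hj : j = 0
  · rw [if_pos hj, hj]
    have h1 : ¬((0 : ZMod n) = ((p : ℕ) : ZMod n)) := by
      rw [eqP_iff hn hp2, ZMod.val_zero]; omega
    simp only [Df, ZMod.val_zero, if_pos (show 0 < p by omega), if_neg h1]
    ring
  rw [if_neg hj]
  have hv1 : 1 ≤ j.val := by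
    rcases Nat.eq_zero_or_pos j.val with h | h
    · exact absurd ((ZMod.val_eq_zero j).mp h) hj
    · exact h
  have hT2 : tropMin n (ZC n k 0) (Df n b p d) (((k + 1 : ℕ) : ZMod n) - j) j
      = if p ≤ j.val then 1 else 0 := by
    unfold tropMin
    by_cases h : ((k + 1 : ℕ) : ZMod n) - j = 0
    · rw [if_pos h]
      have hjk : j = ((k + 1 : ℕ) : ZMod n) := by linear_combination -h
      rw [hjk, DfK1 hn hk hbk hd1 hd2, K1_val hn hk]
    · rw [if_neg h, if_neg hj]
      have hZ : ZC n k 0 (((k + 1 : ℕ) : ZMod n) - j) = 1 := by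
        unfold ZC
        rw [if_neg h, if_neg]
        intro hh
        apply hj
        have h0 : ((0 : ℕ) : ZMod n) = 0 := by push_cast; ring
        rw [h0, sub_zero] at hh
        linear_combination -hh
      rw [hZ, minDf hn hb hd1 j hj]
  have hT1 : tropMin n (ZC n k 0) (Df n b p d) (((k + 2 : ℕ) : ZMod n) - j) (j - 1)
      = if p ≤ j.val - 1 then 1 else 0 := by
    unfold tropMin
    by_cases h : ((k + 2 : ℕ) : ZMod n) - j = 0
    · rw [if_pos h]
      have hjk : j = ((k + 2 : ℕ) : ZMod n) := by linear_combination -h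
      have hkn : k + 2 < n := by
        rcases Nat.lt_or_ge (k + 2) n with h' | h'
        · exact h'
        · exfalso; apply hj; rw [hjk]
          have he : k + 2 = n := by omega
          rw [he]; exact ZMod.natCast_self n
      have hvj : j.val = k + 2 := by rw [hjk]; exact ZMod.val_cast_of_lt hkn
      have hj1 : j - 1 = ((k + 1 : ℕ) : ZMod n) := by rw [hjk]; push_cast; ring
      rw [hj1, DfK1 hn hk hbk hd1 hd2, hvj]
      norm_num
    · rw [if_neg h]
      by_cases h2 : j - 1 = 0
      · rw [if_pos h2]
        have hj1 : j = 1 := by linear_combination h2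
        have he : ((k + 2 : ℕ) : ZMod n) - j = ((k + 1 : ℕ) : ZMod n) := by
          rw [hj1]; push_cast; ring
        rw [he, ZC0_K1 hn]
        have hv : j.val = 1 := by rw [hj1]; exact ZMod.val_one n
        rw [hv, if_neg (by omega)]
      · rw [if_neg h2]
        have hZ : ZC n k 0 (((k + 2 : ℕ) : ZMod n) - j) = 1 := by
          unfold ZC
          rw [if_neg h, if_neg]
          intro hh
          apply h2
          have h0 : ((0 : ℕ) : ZMod n) = 0 := by push_cast; ring
          rw [h0, sub_zero] at hh
          push_cast at hh
          linear_combination -hh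
        rw [hZ, minDf hn hb hd1 (j - 1) h2, sub_one_val hn j, if_neg hj]
  rw [hT1, hT2]
  simp only [eqP_iff hn hp2 j]
  split_ifs <;> omega

/-- Processing the tail: the carrier becomes `ZC p`. -/
lemma stepZ_D (hn : 3 ≤ n) (hk : k ≤ n - 2) (hb0 : b 0 = 0)
    (hb : ∀ j : ZMod n, j ≠ 0 → 1 ≤ b j) (hbk : b ((k + 1 : ℕ) : ZMod n) = 1)
    (hp1 : 1 ≤ p) (hp2 : p ≤ n - 1) (hd1 : 1 ≤ d) (hd2 : d ≤ b ((p : ℕ) : ZMod n)) :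
    stepZ n k (ZC n k 0) (Df n b p d) = ZC n k p := by
  haveI : NeZero n := ⟨by omega⟩
  funext j
  unfold stepZ
  by_cases hj : j = 0
  · rw [if_pos hj, hj]
    unfold ZC
    rw [if_pos rfl]
  rw [if_neg hj]
  have hU2 : tropMin n (ZC n k 0) (Df n b p d) j (((k + 1 : ℕ) : ZMod n) - j)
      = if p ≤ (((k + 1 : ℕ) : ZMod n) - j).val then 1 else 0 := by
    unfold tropMin
    rw [if_neg hj]
    by_cases h : ((k + 1 : ℕ) : ZMod n) - j = 0
    · rw [if_pos h]
      have hjk : j = ((k + 1 : ℕ) : ZMod n) := by linear_combination -h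
      rw [h, ZMod.val_zero, hjk, ZC0_K1 hn, if_neg (by omega)]
    · rw [if_neg h]
      have hZ : ZC n k 0 j = 1 := by
        unfold ZC
        rw [if_neg hj, if_neg]
        intro hh
        apply h
        have h0 : ((0 : ℕ) : ZMod n) = 0 := by push_cast; ring
        rw [h0, sub_zero] at hh
        rw [hh]; ring
      rw [hZ, minDf hn hb hd1 _ h]
  have hc : ((k : ℕ) : ZMod n) - j = ((k + 1 : ℕ) : ZMod n) - j - 1 := by
    push_cast; ring
  have hU1 : tropMin n (ZC n k 0) (Df n b p d) (j + 1) (((k : ℕ) : ZMod n) - j)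
      = if p ≤ (((k + 1 : ℕ) : ZMod n) - j - 1).val then 1 else 0 := by
    rw [hc]
    unfold tropMin
    by_cases h : j + 1 = 0
    · rw [if_pos h]
      have he : ((k + 1 : ℕ) : ZMod n) - j - 1 = ((k + 1 : ℕ) : ZMod n) := by
        linear_combination -h
      rw [he, DfK1 hn hk hbk hd1 hd2, K1_val hn hk]
    · rw [if_neg h]
      by_cases h2 : ((k + 1 : ℕ) : ZMod n) - j - 1 = 0
      · rw [if_pos h2]
        have he : j + 1 = ((k + 1 : ℕ) : ZMod n) := by linear_combination -h2
        rw [he, ZC0_K1 hn, h2, ZMod.val_zero, if_neg (by omega)]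
      · rw [if_neg h2]
        have hZ : ZC n k 0 (j + 1) = 1 := by
          unfold ZC
          rw [if_neg h, if_neg]
          intro hh
          apply h2
          have h0 : ((0 : ℕ) : ZMod n) = 0 := by push_cast; ring
          rw [h0, sub_zero] at hh
          linear_combination -hh
        rw [hZ, minDf hn hb hd1 _ h2]
  rw [hU1, hU2, ZC_eval (p := 0) hn (by omega) j hj, ZC_eval hn hp2 j hj]
  have hw := ZMod.val_lt (((k + 1 : ℕ) : ZMod n) - j)
  have hw' := w'_val hn (((k + 1 : ℕ) : ZMod n) - j)
  rw [hw']
  split_ifs <;> omega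

/-- Processing the head: the state gains one unit at slot `p`. -/
lemma stepY_C (hn : 3 ≤ n) (hk : k ≤ n - 2) (hb0 : b 0 = 0)
    (hb : ∀ j : ZMod n, j ≠ 0 → 1 ≤ b j) (hbk : b ((k + 1 : ℕ) : ZMod n) = 1)
    (hp1 : 1 ≤ p) (hp2 : p ≤ n - 1) (hd1 : 1 ≤ d) (hd2 : d ≤ b ((p : ℕ) : ZMod n)) :
    stepY n k (ZC n k p) (Cf n b p d) =
      fun j => Cf n b p d j + (if j = ((p : ℕ) : ZMod n) then 1 else 0) := by
  haveI : NeZero n := ⟨by omega⟩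
  haveI : Fact (1 < n) := ⟨by omega⟩
  funext j
  unfold stepY
  by_cases hj : j = 0
  · rw [if_pos hj, hj]
    have h1 : ¬((0 : ZMod n) = ((p : ℕ) : ZMod n)) := by
      rw [eqP_iff hn hp2, ZMod.val_zero]; omega
    simp only [Cf, ZMod.val_zero, if_pos (show 0 < p by omega), if_neg h1, hb0]
    ring
  rw [if_neg hj]
  have hv1 : 1 ≤ j.val := by
    rcases Nat.eq_zero_or_pos j.val with h | h
    · exact absurd ((ZMod.val_eq_zero j).mp h) hj
    · exact h
  have hT2 : tropMin n (ZC n k p) (Cf n b p d) (((k + 1 : ℕ) : ZMod n) - j) j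
      = if j.val < p then 1 else 0 := by
    unfold tropMin
    by_cases h : ((k + 1 : ℕ) : ZMod n) - j = 0
    · rw [if_pos h]
      have hjk : j = ((k + 1 : ℕ) : ZMod n) := by linear_combination -h
      rw [hjk, CfK1 hn hk hbk hd1 hd2, K1_val hn hk]
    · rw [if_neg h, if_neg hj]
      by_cases hP : j = ((p : ℕ) : ZMod n)
      · rw [hP]
        have hZ : ZC n k p (((k + 1 : ℕ) : ZMod n) - ((p : ℕ) : ZMod n)) = 0 := by
          unfold ZC
          rw [if_neg (by rw [← hP]; exact h), if_pos rfl]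
        rw [hZ, CfP_nonneg hd2 hn hp2, P_val hn hp2, if_neg (by omega)]
      · have hZ : ZC n k p (((k + 1 : ℕ) : ZMod n) - j) = 1 := by
          unfold ZC
          rw [if_neg h, if_neg (fun hh => hP (by linear_combination -hh))]
        rw [hZ, minCf hn hb j hj (fun hv => hP ((eqP_iff hn hp2 j).mpr hv))]
  have hT1 : tropMin n (ZC n k p) (Cf n b p d) (((k + 2 : ℕ) : ZMod n) - j) (j - 1)
      = if j.val - 1 < p then 1 else 0 := by
    unfold tropMin
    by_cases h : ((k + 2 : ℕ) : ZMod n) - j = 0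
    · rw [if_pos h]
      have hjk : j = ((k + 2 : ℕ) : ZMod n) := by linear_combination -h
      have hkn : k + 2 < n := by
        rcases Nat.lt_or_ge (k + 2) n with h' | h'
        · exact h'
        · exfalso; apply hj; rw [hjk]
          have he : k + 2 = n := by omega
          rw [he]; exact ZMod.natCast_self n
      have hvj : j.val = k + 2 := by rw [hjk]; exact ZMod.val_cast_of_lt hkn
      have hj1 : j - 1 = ((k + 1 : ℕ) : ZMod n) := by rw [hjk]; push_cast; ring
      rw [hj1, CfK1 hn hk hbk hd1 hd2, hvj]
      norm_num
    · rw [if_neg h]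
      by_cases h2 : j - 1 = 0
      · rw [if_pos h2]
        have hj1 : j = 1 := by linear_combination h2
        have he : ((k + 2 : ℕ) : ZMod n) - j = ((k + 1 : ℕ) : ZMod n) := by
          rw [hj1]; push_cast; ring
        rw [he, ZCp_K1 hn hk hp1 hp2]
        have hv : j.val = 1 := by rw [hj1]; exact ZMod.val_one n
        rw [hv, if_pos (by omega)]
      · rw [if_neg h2]
        by_cases hP : j - 1 = ((p : ℕ) : ZMod n)
        · have hZ : ZC n k p (((k + 2 : ℕ) : ZMod n) - j) = 0 := by
            unfold ZC
            rw [if_neg h, if_pos (by push_cast at hP ⊢; linear_combination -hP)]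
          have hvp : j.val - 1 = p := by
            have hs := sub_one_val hn j
            rw [if_neg hj] at hs
            rw [← hs, hP, P_val hn hp2]
          rw [hZ, hP, CfP_nonneg hd2 hn hp2, hvp, if_neg (by omega)]
        · have hZ : ZC n k p (((k + 2 : ℕ) : ZMod n) - j) = 1 := by
            unfold ZC
            rw [if_neg h, if_neg]
            intro hh
            apply hP
            push_cast at hh ⊢
            linear_combination -hh
          rw [hZ, minCf hn hb (j - 1) h2 (fun hv => hP ((eqP_iff hn hp2 _).mpr hv))]
          have hs := sub_one_val hn j
          rw [if_neg hj] at hs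
          rw [hs]
  rw [hT1, hT2]
  simp only [eqP_iff hn hp2 j]
  split_ifs <;> omega

/-- Processing the head: the carrier returns to `Zs`. -/
lemma stepZ_C (hn : 3 ≤ n) (hk : k ≤ n - 2) (hb0 : b 0 = 0)
    (hb : ∀ j : ZMod n, j ≠ 0 → 1 ≤ b j) (hbk : b ((k + 1 : ℕ) : ZMod n) = 1)
    (hp1 : 1 ≤ p) (hp2 : p ≤ n - 1) (hd1 : 1 ≤ d) (hd2 : d ≤ b ((p : ℕ) : ZMod n)) :
    stepZ n k (ZC n k p) (Cf n b p d) = ZC n k 0 := by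
  haveI : NeZero n := ⟨by omega⟩
  funext j
  unfold stepZ
  by_cases hj : j = 0
  · rw [if_pos hj, hj]
    unfold ZC
    rw [if_pos rfl]
  rw [if_neg hj]
  have hU2 : tropMin n (ZC n k p) (Cf n b p d) j (((k + 1 : ℕ) : ZMod n) - j)
      = if (((k + 1 : ℕ) : ZMod n) - j).val < p then 1 else 0 := by
    unfold tropMin
    rw [if_neg hj]
    by_cases h : ((k + 1 : ℕ) : ZMod n) - j = 0
    · rw [if_pos h]
      have hjk : j = ((k + 1 : ℕ) : ZMod n) := by linear_combination -h
      rw [h, ZMod.val_zero, hjk, ZCp_K1 hn hk hp1 hp2, if_pos (by omega)]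
    · rw [if_neg h]
      by_cases hP : j = ((k + 1 : ℕ) : ZMod n) - ((p : ℕ) : ZMod n)
      · have hZ : ZC n k p j = 0 := by
          unfold ZC
          rw [if_neg hj, if_pos hP]
        have harg : ((k + 1 : ℕ) : ZMod n) - j = ((p : ℕ) : ZMod n) := by
          rw [hP]; ring
        rw [hZ, harg, CfP_nonneg hd2 hn hp2, P_val hn hp2, if_neg (by omega)]
      · have hZ : ZC n k p j = 1 := by
          unfold ZC
          rw [if_neg hj, if_neg hP]
        have hnep : (((k + 1 : ℕ) : ZMod n) - j).val ≠ p := fun hv => hP (by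
          have h2 := (eqP_iff hn hp2 (((k + 1 : ℕ) : ZMod n) - j)).mpr hv
          linear_combination -h2)
        rw [hZ, minCf hn hb _ h hnep]
  have hc : ((k : ℕ) : ZMod n) - j = ((k + 1 : ℕ) : ZMod n) - j - 1 := by
    push_cast; ring
  have hU1 : tropMin n (ZC n k p) (Cf n b p d) (j + 1) (((k : ℕ) : ZMod n) - j)
      = if (((k + 1 : ℕ) : ZMod n) - j - 1).val < p then 1 else 0 := by
    rw [hc]
    unfold tropMin
    by_cases h : j + 1 = 0
    · rw [if_pos h]
      have he : ((k + 1 : ℕ) : ZMod n) - j - 1 = ((k + 1 : ℕ) : ZMod n) := by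
        linear_combination -h
      rw [he, CfK1 hn hk hbk hd1 hd2, K1_val hn hk]
    · rw [if_neg h]
      by_cases h2 : ((k + 1 : ℕ) : ZMod n) - j - 1 = 0
      · rw [if_pos h2]
        have he : j + 1 = ((k + 1 : ℕ) : ZMod n) := by linear_combination -h2
        rw [he, ZCp_K1 hn hk hp1 hp2, h2, ZMod.val_zero, if_pos (by omega)]
      · rw [if_neg h2]
        by_cases hP : j + 1 = ((k + 1 : ℕ) : ZMod n) - ((p : ℕ) : ZMod n)
        · have hZ : ZC n k p (j + 1) = 0 := by
            unfold ZC
            rw [if_neg h, if_pos hP]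
          have harg : ((k + 1 : ℕ) : ZMod n) - j - 1 = ((p : ℕ) : ZMod n) := by
            linear_combination -hP
          rw [hZ, harg, CfP_nonneg hd2 hn hp2, P_val hn hp2, if_neg (by omega)]
        · have hZ : ZC n k p (j + 1) = 1 := by
            unfold ZC
            rw [if_neg h, if_neg hP]
          have hnep : (((k + 1 : ℕ) : ZMod n) - j - 1).val ≠ p := fun hv => hP (by
            have h2 := (eqP_iff hn hp2 (((k + 1 : ℕ) : ZMod n) - j - 1)).mpr hv
            linear_combination -h2)
          rw [hZ, minCf hn hb _ h2 hnep]
  rw [hU1, hU2, ZC_eval hn hp2 j hj, ZC_eval (p := 0) hn (by omega) j hj]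
  have hw := ZMod.val_lt (((k + 1 : ℕ) : ZMod n) - j)
  have hw' := w'_val hn (((k + 1 : ℕ) : ZMod n) - j)
  rw [hw']
  split_ifs <;> omega
end

/-- The configuration shape: tail at site `m`, head at site `m+1`. -/
def shape (n : ℕ) (b : ZMod n → ℤ) (m p : ℕ) (d : ℤ) : ℕ → ZMod n → ℤ :=
  fun i => if i = m then Df n b p d else if i = m + 1 then Cf n b p d else fun _ => 0

/-- Partial sums `S_q = b_0 + ⋯ + b_q`. -/
def SS (n : ℕ) (b : ZMod n → ℤ) (q : ℕ) : ℤ :=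
  ∑ i ∈ Finset.range (q + 1), b ((i : ℕ) : ZMod n)

section
variable {n k p m : ℕ} {b : ZMod n → ℤ} {d : ℤ}

lemma carriers_spec (hn : 3 ≤ n) (hk : k ≤ n - 2) (hb0 : b 0 = 0)
    (hb : ∀ j : ZMod n, j ≠ 0 → 1 ≤ b j) (hbk : b ((k + 1 : ℕ) : ZMod n) = 1)
    (hp1 : 1 ≤ p) (hp2 : p ≤ n - 1) (hd1 : 1 ≤ d) (hd2 : d ≤ b ((p : ℕ) : ZMod n)) :
    ∀ i, carriers n k (ZC n k 0) (shape n b m p d) i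
      = if i = m + 1 then ZC n k p else ZC n k 0 := by
  intro i
  induction i with
  | zero =>
    rw [if_neg (by omega)]
    rfl
  | succ i ih =>
    show stepZ n k (carriers n k (ZC n k 0) (shape n b m p d) i) (shape n b m p d i) = _
    rw [ih]
    unfold shape
    by_cases h1 : i = m
    · rw [if_neg (by omega), if_pos h1, if_pos (by omega)]
      exact stepZ_D hn hk hb0 hb hbk hp1 hp2 hd1 hd2
    by_cases h2 : i = m + 1
    · rw [if_pos h2, if_neg h1, if_pos h2, if_neg (by omega)]
      exact stepZ_C hn hk hb0 hb hbk hp1 hp2 hd1 hd2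
    · rw [if_neg h2, if_neg h1, if_neg h2, if_neg (by omega)]
      exact stepZ_W hn hk

lemma step_shape (hn : 3 ≤ n) (hk : k ≤ n - 2) (hb0 : b 0 = 0)
    (hb : ∀ j : ZMod n, j ≠ 0 → 1 ≤ b j) (hbk : b ((k + 1 : ℕ) : ZMod n) = 1)
    (hp1 : 1 ≤ p) (hp2 : p ≤ n - 1) (hd1 : 1 ≤ d) (hd2 : d ≤ b ((p : ℕ) : ZMod n)) :
    (fun i => stepY n k (carriers n k (ZC n k 0) (shape n b m p d) i) (shape n b m p d i))
      = fun i => if i = m then (fun j => Df n b p d j - (if j = ((p : ℕ) : ZMod n) then 1 else 0))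
          else if i = m + 1 then (fun j => Cf n b p d j + (if j = ((p : ℕ) : ZMod n) then 1 else 0))
          else fun _ => 0 := by
  funext i
  rw [carriers_spec hn hk hb0 hb hbk hp1 hp2 hd1 hd2 i]
  unfold shape
  by_cases h1 : i = m
  · rw [if_neg (by omega), if_pos h1, if_pos h1]
    exact stepY_D hn hk hb0 hb hbk hp1 hp2 hd1 hd2
  by_cases h2 : i = m + 1
  · rw [if_pos h2, if_neg h1, if_pos h2, if_neg h1, if_pos h2]
    exact stepY_C hn hk hb0 hb hbk hp1 hp2 hd1 hd2
  · rw [if_neg h2, if_neg h1, if_neg h2, if_neg h1, if_neg h2]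
    exact stepY_W hn hk

lemma Df_base (hn : 3 ≤ n) (hb0 : b 0 = 0) : Df n b 1 (b ((1 : ℕ) : ZMod n)) = b := by
  haveI : NeZero n := ⟨by omega⟩
  funext j
  unfold Df
  by_cases h : j.val < 1
  · have hj : j = 0 := (ZMod.val_eq_zero j).mp (by omega)
    rw [if_pos h, hj, hb0]
  by_cases h2 : j.val = 1
  · have hj : ((1 : ℕ) : ZMod n) = j := val_inj (by rw [ZMod.val_cast_of_lt (by omega), h2])
    rw [if_neg h, if_pos h2, hj]
  · rw [if_neg h, if_neg h2]

lemma Cf_base (hn : 3 ≤ n) (hb0 : b 0 = 0) :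
    Cf n b 1 (b ((1 : ℕ) : ZMod n)) = fun _ => 0 := by
  haveI : NeZero n := ⟨by omega⟩
  funext j
  unfold Cf
  by_cases h : j.val < 1
  · have hj : j = 0 := (ZMod.val_eq_zero j).mp (by omega)
    rw [if_pos h, hj, hb0]
  by_cases h2 : j.val = 1
  · have hj : ((1 : ℕ) : ZMod n) = j := val_inj (by rw [ZMod.val_cast_of_lt (by omega), h2])
    rw [if_neg h, if_pos h2, hj, sub_self]
  · rw [if_neg h, if_neg h2]

lemma reD1 (hn : 3 ≤ n) (hp2 : p ≤ n - 1) :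
    (fun j => Df n b p d j - (if j = ((p : ℕ) : ZMod n) then 1 else 0)) = Df n b p (d - 1) := by
  funext j
  simp only [Df, eqP_iff hn hp2 j]
  split_ifs <;> omega

lemma reC1 (hn : 3 ≤ n) (hp2 : p ≤ n - 1) :
    (fun j => Cf n b p d j + (if j = ((p : ℕ) : ZMod n) then 1 else 0)) = Cf n b p (d - 1) := by
  funext j
  simp only [Cf, eqP_iff hn hp2 j]
  split_ifs <;> omega

lemma reD2 (hn : 3 ≤ n) (hp2 : p ≤ n - 1) (hpn : p + 1 ≤ n - 1) :
    (fun j => Df n b p 1 j - (if j = ((p : ℕ) : ZMod n) then 1 else 0))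
      = Df n b (p + 1) (b ((p + 1 : ℕ) : ZMod n)) := by
  haveI : NeZero n := ⟨by omega⟩
  funext j
  simp only [Df, eqP_iff hn hp2 j]
  by_cases h : j.val = p + 1
  · have hj : ((p + 1 : ℕ) : ZMod n) = j := val_inj (by rw [ZMod.val_cast_of_lt (by omega), h])
    rw [hj]
    split_ifs <;> omega
  · split_ifs <;> omega

lemma reC2 (hn : 3 ≤ n) (hp2 : p ≤ n - 1) (hpn : p + 1 ≤ n - 1) :
    (fun j => Cf n b p 1 j + (if j = ((p : ℕ) : ZMod n) then 1 else 0))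
      = Cf n b (p + 1) (b ((p + 1 : ℕ) : ZMod n)) := by
  haveI : NeZero n := ⟨by omega⟩
  funext j
  simp only [Cf, eqP_iff hn hp2 j]
  by_cases h : j.val = p + 1
  · have hj : ((p + 1 : ℕ) : ZMod n) = j := val_inj (by rw [ZMod.val_cast_of_lt (by omega), h])
    rw [hj]
    split_ifs <;> omega
  · split_ifs <;> omega

lemma reD3 (hn : 3 ≤ n) (hp2 : p ≤ n - 1) (hpn : p = n - 1) :
    (fun j => Df n b p 1 j - (if j = ((p : ℕ) : ZMod n) then 1 else 0)) = fun _ => 0 := by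
  haveI : NeZero n := ⟨by omega⟩
  funext j
  have hv := ZMod.val_lt j
  simp only [Df, eqP_iff hn hp2 j]
  split_ifs <;> omega

lemma reC3 (hn : 3 ≤ n) (hp2 : p ≤ n - 1) (hpn : p = n - 1) :
    (fun j => Cf n b p 1 j + (if j = ((p : ℕ) : ZMod n) then 1 else 0)) = b := by
  haveI : NeZero n := ⟨by omega⟩
  funext j
  have hv := ZMod.val_lt j
  simp only [Cf, eqP_iff hn hp2 j]
  split_ifs <;> omega

lemma SS_zero (hb0 : b 0 = 0) : SS n b 0 = 0 := by
  unfold SS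
  rw [Finset.sum_range_one]
  simpa using hb0

lemma SS_succ (q : ℕ) : SS n b (q + 1) = SS n b q + b ((q + 1 : ℕ) : ZMod n) :=
  Finset.sum_range_succ _ _

lemma SS_ge (hn : 3 ≤ n) (hb0 : b 0 = 0) (hb : ∀ j : ZMod n, j ≠ 0 → 1 ≤ b j) :
    ∀ q, q ≤ n - 1 → (q : ℤ) ≤ SS n b q := by
  haveI : NeZero n := ⟨by omega⟩
  intro q
  induction q with
  | zero => intro _; rw [SS_zero hb0]; norm_num
  | succ q ih =>
    intro hq
    have h1 : 1 ≤ b ((q + 1 : ℕ) : ZMod n) := by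
      apply hb
      intro hz
      have := ZMod.val_cast_of_lt (show q + 1 < n by omega) (a := q + 1)
      rw [hz, ZMod.val_zero] at this
      omega
    have h2 := ih (by omega)
    rw [SS_succ]
    push_cast at h1 ⊢
    linarith

lemma SS_mono (hn : 3 ≤ n) (hb : ∀ j : ZMod n, j ≠ 0 → 1 ≤ b j) (q r : ℕ)
    (hqr : q ≤ r) (hr : r ≤ n - 1) : SS n b q ≤ SS n b r := by
  haveI : NeZero n := ⟨by omega⟩
  unfold SS
  apply Finset.sum_le_sum_of_subset_of_nonneg (Finset.range_subset_range.mpr (by omega))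
  intro i hi hni
  rw [Finset.mem_range] at hi
  rw [Finset.mem_range] at hni
  have h1 : 1 ≤ b ((i : ℕ) : ZMod n) := by
    apply hb
    intro hz
    have := ZMod.val_cast_of_lt (show i < n by omega) (a := i)
    rw [hz, ZMod.val_zero] at this
    omega
  linarith

lemma invariant (hn : 3 ≤ n) (hk : k ≤ n - 2) (hb0 : b 0 = 0)
    (hb : ∀ j : ZMod n, j ≠ 0 → 1 ≤ b j) (hbk : b ((k + 1 : ℕ) : ZMod n) = 1)
    (B : ℕ) (hB : (B : ℤ) = SS n b (n - 1)) :
    ∀ t : ℕ, ∃ m p : ℕ, ∃ d : ℤ, ∃ l : ℕ,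
      1 ≤ p ∧ p ≤ n - 1 ∧ 1 ≤ d ∧ d ≤ b ((p : ℕ) : ZMod n) ∧
      t = m * B + l ∧ (l : ℤ) = SS n b p - d ∧
      config n k (ZC n k 0) (fun i => if i = 0 then b else fun _ => 0) t
        = shape n b m p d := by
  haveI : NeZero n := ⟨by omega⟩
  have h1ne : ((1 : ℕ) : ZMod n) ≠ 0 := by
    intro hz
    have := ZMod.val_cast_of_lt (show 1 < n by omega) (a := 1)
    rw [hz, ZMod.val_zero] at this
    omega
  have hb1 : 1 ≤ b ((1 : ℕ) : ZMod n) := hb _ h1ne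
  have hSS1 : SS n b 1 = b ((1 : ℕ) : ZMod n) := by
    have := SS_succ (n := n) (b := b) 0
    rw [SS_zero hb0] at this
    norm_num at this ⊢
    exact this
  intro t
  induction t with
  | zero =>
    refine ⟨0, 1, b ((1 : ℕ) : ZMod n), 0, le_refl _, by omega, hb1, le_refl _,
      by omega, by rw [hSS1]; ring, ?_⟩
    show (fun i => if i = 0 then b else fun _ => 0) = _
    funext i
    unfold shape
    by_cases h : i = 0
    · rw [if_pos h, if_pos h, Df_base hn hb0]
    by_cases h2 : i = 1
    · rw [if_neg h, if_neg h, if_pos (by omega), Cf_base hn hb0]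
    · rw [if_neg h, if_neg h, if_neg (by omega)]
  | succ t ih =>
    obtain ⟨m, p, d, l, hp1, hp2, hd1, hd2, ht, hl, hcfg⟩ := ih
    have hstep : config n k (ZC n k 0) (fun i => if i = 0 then b else fun _ => 0) (t + 1)
        = fun i => stepY n k
            (carriers n k (ZC n k 0)
              (config n k (ZC n k 0) (fun i => if i = 0 then b else fun _ => 0) t) i)
            (config n k (ZC n k 0) (fun i => if i = 0 then b else fun _ => 0) t i) := rfl
    rw [hcfg] at hstep
    rw [step_shape hn hk hb0 hb hbk hp1 hp2 hd1 hd2] at hstep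
    by_cases hd : 2 ≤ d
    · refine ⟨m, p, d - 1, l + 1, hp1, hp2, by omega, by omega, by omega,
        by push_cast; push_cast at hl; linarith, ?_⟩
      rw [reD1 hn hp2, reC1 hn hp2] at hstep
      exact hstep
    · have hd' : d = 1 := by omega
      subst hd'
      by_cases hpn : p + 1 ≤ n - 1
      · have hbp1 : 1 ≤ b ((p + 1 : ℕ) : ZMod n) := by
          apply hb
          intro hz
          have := ZMod.val_cast_of_lt (show p + 1 < n by omega) (a := p + 1)
          rw [hz, ZMod.val_zero] at this
          omega
        refine ⟨m, p + 1, b ((p + 1 : ℕ) : ZMod n), l + 1, by omega, hpn, hbp1, le_refl _,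
          by omega, ?_, ?_⟩
        · rw [SS_succ]
          push_cast
          push_cast at hl
          linarith
        · rw [reD2 hn hp2 hpn, reC2 hn hp2 hpn] at hstep
          exact hstep
      · have hpn' : p = n - 1 := by omega
        have hlB : (l : ℤ) = (B : ℤ) - 1 := by
          rw [hl, hpn', ← hB]
        have hlB' : l + 1 = B := by omega
        refine ⟨m + 1, 1, b ((1 : ℕ) : ZMod n), 0, le_refl _, by omega, hb1, le_refl _,
          ?_, by rw [hSS1]; ring, ?_⟩
        · rw [ht, add_assoc, hlB']
          ring
        · rw [reD3 hn hp2 hpn', reC3 hn hp2 hpn'] at hstep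
          rw [hstep]
          funext i
          unfold shape
          rw [Df_base hn hb0, Cf_base hn hb0]
          split_ifs <;> first | rfl | (exfalso; omega)
end

section
variable {n k : ℕ} {b : ZMod n → ℤ}

lemma ZC0_eq (hn : 3 ≤ n) :
    (fun j => if j = 0 then (0 : ℤ) else
      if j = ((k + 1 : ℕ) : ZMod n) then 0 else 1) = ZC n k 0 := by
  funext j
  unfold ZC
  norm_num

end

end Sol

/-- Theorem (one-solitons of `Φ(n,k)`): any `b = (b_1,…,b_{n−1})` with `b_j ≥ 1` and
`b_{k+1} = 1` is a one-soliton of minimal length one and velocity `1/B`,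
`B = b_1 + ⋯ + b_{n−1}`: (i) at each time step the final carrier equals the initial
carrier `Z* = (1,…,1,0,1,…,1)` (with `0` in slot `k+1`), and (ii) after `m·B` time
steps the configuration is the `m`-site translate of the initial one.
Tuples are modelled as functions on `ZMod n` with the slot of the class `0`
(the subscript `n`) set to `0`. -/


theorem stmt_4 (n k : ℕ) (hn : 3 ≤ n) (hk : k ≤ n - 2)
    (b : ZMod n → ℤ) (hb0 : b 0 = 0)
    (hb : ∀ j : ZMod n, j ≠ 0 → 1 ≤ b j)
    (hbk : b ((k + 1 : ℕ) : ZMod n) = 1)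
    (B : ℕ) (hB : (B : ℤ) = ∑ j ∈ Finset.range n, b ((j : ℕ) : ZMod n))
    (W Zs : ZMod n → ℤ)
    (hW : W = fun _ => 0)
    (hZs : Zs = fun j => if j = 0 then 0 else
      if j = ((k + 1 : ℕ) : ZMod n) then 0 else 1)
    (Y0 : ℕ → ZMod n → ℤ)
    (hY0 : Y0 = fun i => if i = 0 then b else W) :
    (∀ t : ℕ, ∃ N : ℕ, ∀ i : ℕ, N ≤ i →
        carriers n k Zs (config n k Zs Y0 t) i = Zs) ∧
    (∀ m : ℕ, config n k Zs Y0 (m * B) = fun i => if i = m then b else W) := by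
  haveI : NeZero n := ⟨by omega⟩
  subst hW hY0 hZs
  rw [Sol.ZC0_eq hn]
  have hBS : (B : ℤ) = Sol.SS n b (n - 1) := by
    rw [hB]
    unfold Sol.SS
    rw [show n - 1 + 1 = n by omega]
  have hinv := Sol.invariant hn hk hb0 hb hbk B hBS
  constructor
  · intro t
    obtain ⟨m, p, d, l, hp1, hp2, hd1, hd2, ht, hl, hcfg⟩ := hinv t
    refine ⟨m + 2, fun i hi => ?_⟩
    rw [hcfg, Sol.carriers_spec hn hk hb0 hb hbk hp1 hp2 hd1 hd2 i, if_neg (by omega)]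
  · intro m
    obtain ⟨m', p, d, l, hp1, hp2, hd1, hd2, ht, hl, hcfg⟩ := hinv (m * B)
    have hB1 : 1 ≤ B := by
      have h1 := Sol.SS_ge hn hb0 hb (n - 1) (le_refl _)
      omega
    have hlB : l < B := by
      have h2 := Sol.SS_mono hn hb p (n - 1) hp2 (le_refl _)
      omega
    have hm' : m' = m := by
      rcases Nat.lt_trichotomy m' m with h | h | h
      · exfalso
        have h1 : (m' + 1) * B ≤ m * B := Nat.mul_le_mul_right B (by omega)
        rw [add_mul, one_mul] at h1
        omega
      · exact h
      · exfalso
        have h1 : (m + 1) * B ≤ m' * B := Nat.mul_le_mul_right B (by omega)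
        rw [add_mul, one_mul] at h1
        omega
    subst hm'
    have hl0 : l = 0 := by omega
    have hp' : p = 1 := by
      by_contra hne
      have e : Sol.SS n b p = Sol.SS n b (p - 1) + b ((p : ℕ) : ZMod n) := by
        rw [show p = p - 1 + 1 by omega, Sol.SS_succ, show p - 1 + 1 = p by omega]
      have h3 := Sol.SS_ge hn hb0 hb (p - 1) (by omega)
      omega
    subst hp'
    have hSS1 : Sol.SS n b 1 = b ((1 : ℕ) : ZMod n) := by
      have h := Sol.SS_succ (n := n) (b := b) 0
      rw [Sol.SS_zero hb0] at h
      norm_num at h ⊢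
      exact h
    have hd' : d = b ((1 : ℕ) : ZMod n) := by omega
    subst hd'
    rw [hcfg]
    funext i
    unfold Sol.shape
    rw [Sol.Df_base hn hb0, Sol.Cf_base hn hb0]
    split_ifs <;> first | rfl | (exfalso; omega)
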